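/- Let W be a finite set of size L, η : W → {0,1}, and m = ∑_{a∈W} η(a). Then for any n ≤ L: ∑_{P ⊆ W, |P| = L-n} ∏_{a∈W} η^P(a) = ∑_{ℓ=0}^{L-n} (-1)^ℓ · choose (n+ℓ) ℓ · choose m (n+ℓ), where choose m k = 0 if k > m. (Inclusion–exclusion expansion of the 'exactly n particles' indicator into pure monomials.) -/

import Mathlib

open Finset

theorem flipped_monomial_inclusion_exclusion {α : Type*} [DecidableEq α]
    (W : Finset α) (L n : ℕ) (hW : W.card = L) (hn : n ≤ L)
    (η : α → ℕ) (hη : ∀ a ∈ W, η a ≤ 1) :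
    ((∑ P ∈ W.powersetCard (L - n),
        ∏ a ∈ W, (if a ∈ P then 1 - η a else η a) : ℕ) : ℤ) =
      ∑ ℓ ∈ Finset.range (L - n + 1),
        (-1 : ℤ) ^ ℓ * ((n + ℓ).choose ℓ) * ((∑ a ∈ W, η a).choose (n + ℓ)) := by
  classical
  set m := ∑ a ∈ W, η a with hm
  set S := W.filter (fun a => η a = 1) with hS
  have hval : ∀ a ∈ W, η a = 0 ∨ η a = 1 := fun a ha =>
    Nat.le_one_iff_eq_zero_or_eq_one.mp (hη a ha)
  have hmS : m = S.card := by
    rw [hm, hS, Finset.card_filter]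
    refine Finset.sum_congr rfl fun a ha => ?_
    rcases hval a ha with h | h <;> simp [h]
  have hmL : m ≤ L := by
    rw [hmS, ← hW]; exact Finset.card_filter_le _ _
  -- LHS: the product is the indicator of P = W \ S
  have hprod : ∀ P ∈ W.powersetCard (L - n),
      (∏ a ∈ W, if a ∈ P then 1 - η a else η a) = if P = W \ S then 1 else 0 := by
    intro P hP
    rw [Finset.mem_powersetCard] at hP
    obtain ⟨hPW, -⟩ := hP
    by_cases hPeq : P = W \ S
    · simp only [hPeq, if_pos rfl]
      apply Finset.prod_eq_one
      intro a ha
      by_cases haP : a ∈ W \ S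
      · have h0 : η a = 0 := by
          rcases hval a ha with h | h
          · exact h
          · exact absurd (Finset.mem_filter.mpr ⟨ha, h⟩) (Finset.mem_sdiff.mp haP).2
        simp [haP, h0]
      · have haS : a ∈ S := by
          by_contra hc
          exact haP (Finset.mem_sdiff.mpr ⟨ha, hc⟩)
        have h1 : η a = 1 := (Finset.mem_filter.mp haS).2
        simp [haP, h1]
    · rw [if_neg hPeq]
      have : ¬ (P ⊆ W \ S ∧ W \ S ⊆ P) := by
        intro ⟨h1, h2⟩
        exact hPeq (Finset.Subset.antisymm h1 h2)
      rw [not_and_or] at this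
      rcases this with h | h
      · obtain ⟨a, haP, haWS⟩ := Finset.not_subset.mp h
        have haW : a ∈ W := hPW haP
        have haS : a ∈ S := by
          by_contra hc
          exact haWS (Finset.mem_sdiff.mpr ⟨haW, hc⟩)
        have h1 : η a = 1 := (Finset.mem_filter.mp haS).2
        exact Finset.prod_eq_zero haW (by simp [haP, h1])
      · obtain ⟨a, haWS, haP⟩ := Finset.not_subset.mp h
        obtain ⟨haW, haS⟩ := Finset.mem_sdiff.mp haWS
        have h0 : η a = 0 := by
          rcases hval a haW with h' | h'
          · exact h'
          · exact absurd (Finset.mem_filter.mpr ⟨haW, h'⟩) haS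
        exact Finset.prod_eq_zero haW (by simp [haP, h0])
  have hcard : (W \ S).card = L - m := by
    rw [Finset.card_sdiff_of_subset (Finset.filter_subset _ _), hW, hmS]
  have hLHS : (∑ P ∈ W.powersetCard (L - n),
      ∏ a ∈ W, (if a ∈ P then 1 - η a else η a) : ℕ) = if m = n then 1 else 0 := by
    rw [Finset.sum_congr rfl hprod, Finset.sum_ite_eq' (W.powersetCard (L - n)) (W \ S) (fun _ => 1)]
    by_cases h : m = n
    · rw [if_pos h, if_pos]
      rw [Finset.mem_powersetCard]
      exact ⟨Finset.sdiff_subset, by rw [hcard, h]⟩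
    · rw [if_neg h, if_neg]
      rw [Finset.mem_powersetCard]
      rintro ⟨-, hc⟩
      rw [hcard] at hc
      omega
  -- RHS
  have key : ∀ ℓ : ℕ, (n + ℓ).choose ℓ * m.choose (n + ℓ) = m.choose n * (m - n).choose ℓ := by
    intro ℓ
    by_cases h : n + ℓ ≤ m
    · have := Nat.choose_mul (n := m) (k := n + ℓ) (s := n) (Nat.le_add_right n ℓ)
      rw [Nat.add_sub_cancel_left] at this
      rw [← this, Nat.choose_symm_add, mul_comm]
    · rw [Nat.choose_eq_zero_of_lt (show m < n + ℓ by omega), mul_zero]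
      by_cases h2 : n ≤ m
      · rw [Nat.choose_eq_zero_of_lt (show m - n < ℓ by omega), mul_zero]
      · rw [Nat.choose_eq_zero_of_lt (show m < n by omega), zero_mul]
  have hRHS : (∑ ℓ ∈ Finset.range (L - n + 1),
      (-1 : ℤ) ^ ℓ * ((n + ℓ).choose ℓ) * (m.choose (n + ℓ)))
      = if m = n then 1 else 0 := by
    have h1 : ∀ ℓ ∈ Finset.range (L - n + 1),
        (-1 : ℤ) ^ ℓ * ((n + ℓ).choose ℓ) * (m.choose (n + ℓ))
          = (m.choose n : ℤ) * ((-1 : ℤ) ^ ℓ * ((m - n).choose ℓ)) := by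
      intro ℓ _
      have hk : (((n + ℓ).choose ℓ : ℤ)) * (m.choose (n + ℓ)) =
          (m.choose n : ℤ) * ((m - n).choose ℓ) := by
        exact_mod_cast congrArg (Nat.cast (R := ℤ)) (key ℓ)
      rw [mul_assoc, hk]; ring
    rw [Finset.sum_congr rfl h1, ← Finset.mul_sum]
    have hsub : Finset.range (m - n + 1) ⊆ Finset.range (L - n + 1) :=
      Finset.range_subset_range.mpr (by omega)
    rw [← Finset.sum_subset hsub (fun ℓ hℓ hℓ' => by
      have hlt : m - n < ℓ := by
        simp only [Finset.mem_range] at hℓ hℓ'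
        omega
      rw [Nat.choose_eq_zero_of_lt hlt]; simp)]
    rw [Int.alternating_sum_range_choose]
    by_cases h : m = n
    · rw [if_pos h, if_pos (by omega), h, Nat.choose_self]; norm_num
    · rw [if_neg h]
      by_cases h2 : n ≤ m
      · rw [if_neg (by omega), mul_zero]
      · rw [Nat.choose_eq_zero_of_lt (by omega)]; simp
  rw [hLHS, hRHS]
  split <;> simp
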